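/- For positive integers n, m with n ≥ m and every integer ℓ ≥ 0, the quantity I = c_{ℓ+n+2m}(c_ℓ)² − 2 c_{ℓ+n} c_{ℓ+2m} c_ℓ + c_{ℓ+n} (c_{ℓ+m})² satisfies I ≥ G ≥ 0, where G = c_{ℓ+n+2m}(c_ℓ)² − c_{ℓ+n+m} c_{ℓ+m} c_ℓ − c_{ℓ+n} c_{ℓ+2m} c_ℓ + c_{ℓ+n} (c_{ℓ+m})². -/

import Mathlib

open MeasureTheory Real Nat

noncomputable def cauchy2 (n : ℕ) : ℝ :=
  ∫ x in (0:ℝ)..1, ∏ i ∈ Finset.range n, (x + i)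

private lemma cauchy2_cont (k : ℕ) : Continuous fun x : ℝ => ∏ i ∈ Finset.range k, (x + (i:ℝ)) :=
  continuous_finset_prod _ fun i _ => continuous_id.add continuous_const

private lemma cauchy2_pos (k : ℕ) : 0 < cauchy2 k := by
  unfold cauchy2
  refine intervalIntegral.intervalIntegral_pos_of_pos_on
    ((cauchy2_cont k).intervalIntegrable 0 1) (fun x hx => ?_) (by norm_num)
  exact Finset.prod_pos fun i _ => by have h := hx.1; positivity

private lemma cauchy2_succ (k : ℕ) :
    cauchy2 (k + 1) = ∫ x in (0:ℝ)..1, (∏ i ∈ Finset.range k, (x + (i:ℝ))) * (x + k) := by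
  unfold cauchy2
  simp [Finset.prod_range_succ]

set_option maxHeartbeats 1000000 in
private lemma cauchy2_logconvex (k : ℕ) :
    cauchy2 (k + 1) ^ 2 ≤ cauchy2 k * cauchy2 (k + 2) := by
  set f : ℝ → ℝ := fun x => ∏ i ∈ Finset.range k, (x + (i:ℝ)) with hf
  have hfc : Continuous f := cauchy2_cont k
  have hfnn : ∀ x ∈ Set.uIcc (0:ℝ) 1, 0 ≤ f x := by
    intro x hx
    rw [Set.uIcc_of_le (by norm_num : (0:ℝ) ≤ 1)] at hx
    exact Finset.prod_nonneg fun i _ => by have := hx.1; positivity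
  have h2 : cauchy2 (k + 2) = ∫ x in (0:ℝ)..1, f x * (x + k) * (x + k + 1) := by
    unfold cauchy2
    apply intervalIntegral.integral_congr
    intro x _
    simp only [hf, Finset.prod_range_succ]
    push_cast
    ring
  have h1 : cauchy2 (k + 1) = ∫ x in (0:ℝ)..1, f x * (x + k) := cauchy2_succ k
  -- quadratic trick
  set t : ℝ := cauchy2 (k + 1) / cauchy2 k with ht
  have i1 : IntervalIntegrable (fun x => f x * (x + k) ^ 2) volume 0 1 :=
    (hfc.mul ((continuous_id.add continuous_const).pow 2)).intervalIntegrable 0 1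
  have i2 : IntervalIntegrable (fun x => 2 * t * (f x * (x + k))) volume 0 1 :=
    (continuous_const.mul (hfc.mul (continuous_id.add continuous_const))).intervalIntegrable 0 1
  have i3 : IntervalIntegrable (fun x => t ^ 2 * f x) volume 0 1 :=
    (continuous_const.mul hfc).intervalIntegrable 0 1
  have key : (0:ℝ) ≤ ∫ x in (0:ℝ)..1,
      ((f x * (x + k) ^ 2 - 2 * t * (f x * (x + k))) + t ^ 2 * f x) := by
    rw [show (fun x => (f x * (x + (k:ℝ)) ^ 2 - 2 * t * (f x * (x + k))) + t ^ 2 * f x)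
        = fun x => f x * (x + k - t) ^ 2 from by funext x; ring]
    apply intervalIntegral.integral_nonneg (by norm_num)
    intro x hx
    have h0 : 0 ≤ f x := hfnn x (by rw [Set.uIcc_of_le (by norm_num : (0:ℝ) ≤ 1)]; exact hx)
    positivity
  rw [intervalIntegral.integral_add (i1.sub i2) i3,
    intervalIntegral.integral_sub i1 i2, intervalIntegral.integral_const_mul,
    intervalIntegral.integral_const_mul, ← h1] at key
  have hsq : (∫ x in (0:ℝ)..1, f x * (x + k) ^ 2) ≤ cauchy2 (k + 2) := by
    rw [h2]
    have i4 : IntervalIntegrable (fun x => f x * (x + (k:ℝ)) * (x + k + 1)) volume 0 1 :=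
      ((hfc.mul (continuous_id.add continuous_const)).mul
        ((continuous_id.add continuous_const).add continuous_const)).intervalIntegrable 0 1
    apply intervalIntegral.integral_mono_on (by norm_num) i1 i4
    intro x hx
    have h0 : 0 ≤ f x := hfnn x (by rw [Set.uIcc_of_le (by norm_num : (0:ℝ) ≤ 1)]; exact hx)
    have hxk : (0:ℝ) ≤ x + k := by have := hx.1; positivity
    nlinarith [mul_nonneg h0 hxk]
  have hc0 : (0:ℝ) < cauchy2 k := cauchy2_pos k
  have hcint : (∫ x in (0:ℝ)..1, f x) = cauchy2 k := by simp only [hf]; rfl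
  rw [hcint] at key
  have ht2 : t ^ 2 * cauchy2 k = cauchy2 (k+1) ^ 2 / cauchy2 k := by
    rw [ht]; field_simp
  have ht1 : 2 * t * cauchy2 (k + 1) = 2 * (cauchy2 (k+1) ^ 2 / cauchy2 k) := by
    rw [ht]; field_simp
  rw [ht1, ht2] at key
  have hdiv : cauchy2 (k+1) ^ 2 / cauchy2 k ≤ cauchy2 (k+2) := by linarith
  calc cauchy2 (k+1) ^ 2 = cauchy2 (k+1) ^ 2 / cauchy2 k * cauchy2 k := by field_simp
    _ ≤ cauchy2 (k+2) * cauchy2 k := mul_le_mul_of_nonneg_right hdiv hc0.le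
    _ = cauchy2 k * cauchy2 (k+2) := mul_comm _ _

private lemma cauchy2_step {a b : ℕ} (h : a ≤ b) :
    cauchy2 b * cauchy2 (a + 1) ≤ cauchy2 (b + 1) * cauchy2 a := by
  induction b with
  | zero =>
    obtain rfl : a = 0 := by omega
    exact le_of_eq (mul_comm _ _)
  | succ b ih =>
    rcases Nat.lt_or_ge a (b+1) with hab | hab
    · have h1 := ih (by omega)
      have h2 := cauchy2_logconvex b
      have p1 := cauchy2_pos a
      have p2 := cauchy2_pos b
      have p3 := cauchy2_pos (a+1)
      have p4 := cauchy2_pos (b+1)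
      have p5 := cauchy2_pos (b+2)
      nlinarith [mul_le_mul h1 h2 (by positivity) (by positivity)]
    · obtain rfl : a = b + 1 := by omega
      exact le_of_eq (mul_comm _ _)

private lemma cauchy2_ratio (a b k : ℕ) (h : a ≤ b) :
    cauchy2 b * cauchy2 (a + k) ≤ cauchy2 (b + k) * cauchy2 a := by
  induction k with
  | zero => exact le_refl _
  | succ k ih =>
    have st := cauchy2_step (show a + k ≤ b + k by omega)
    have p1 := cauchy2_pos a
    have p2 := cauchy2_pos b
    have p3 := cauchy2_pos (a+k)
    have p4 := cauchy2_pos (b+k)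
    have p5 := cauchy2_pos (a+k+1)
    have p6 := cauchy2_pos (b+k+1)
    have := mul_le_mul ih st (by positivity) (by positivity)
    have goal : cauchy2 b * cauchy2 (a + k + 1) ≤ cauchy2 (b + k + 1) * cauchy2 a := by
      nlinarith [this]
    exact goal

theorem cauchy2_I_ge_G_ge_zero (n m l : ℕ) (hn : 0 < n) (hm : 0 < m) (hnm : m ≤ n) :
    cauchy2 (l + n + 2 * m) * cauchy2 l ^ 2
        - cauchy2 (l + n + m) * cauchy2 (l + m) * cauchy2 l
        - cauchy2 (l + n) * cauchy2 (l + 2 * m) * cauchy2 l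
        + cauchy2 (l + n) * cauchy2 (l + m) ^ 2
      ≤ cauchy2 (l + n + 2 * m) * cauchy2 l ^ 2
        - 2 * cauchy2 (l + n) * cauchy2 (l + 2 * m) * cauchy2 l
        + cauchy2 (l + n) * cauchy2 (l + m) ^ 2
    ∧ 0 ≤ cauchy2 (l + n + 2 * m) * cauchy2 l ^ 2
        - cauchy2 (l + n + m) * cauchy2 (l + m) * cauchy2 l
        - cauchy2 (l + n) * cauchy2 (l + 2 * m) * cauchy2 l
        + cauchy2 (l + n) * cauchy2 (l + m) ^ 2 := by
  have F1 : cauchy2 (l + n) * cauchy2 (l + 2 * m) ≤ cauchy2 (l + n + m) * cauchy2 (l + m) := by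
    have h := cauchy2_ratio (l + m) (l + n) m (by omega)
    rwa [show l + m + m = l + 2 * m from by ring] at h
  have F2 : cauchy2 (l + n + m) * cauchy2 (l + 2 * m)
      ≤ cauchy2 (l + n + 2 * m) * cauchy2 (l + m) := by
    have h := cauchy2_ratio (l + m) (l + n + m) m (by omega)
    rwa [show l + m + m = l + 2 * m from by ring,
      show l + n + m + m = l + n + 2 * m from by ring] at h
  have F3 : cauchy2 (l + m) * cauchy2 (l + m) ≤ cauchy2 (l + 2 * m) * cauchy2 l := by
    have h := cauchy2_ratio l (l + m) m (le_refl _ |>.trans (by omega))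
    rwa [show l + m + m = l + 2 * m from by ring] at h
  have F4 : cauchy2 (l + n) * cauchy2 (l + m) ≤ cauchy2 (l + n + m) * cauchy2 l :=
    cauchy2_ratio l (l + n) m (by omega)
  have pL := cauchy2_pos l
  have pM := cauchy2_pos (l + m)
  have pM2 := cauchy2_pos (l + 2 * m)
  have pN := cauchy2_pos (l + n)
  have pNM := cauchy2_pos (l + n + m)
  have pNM2 := cauchy2_pos (l + n + 2 * m)
  constructor
  · nlinarith [mul_le_mul_of_nonneg_right F1 pL.le]
  · -- G = cL * D2 - cM * D1 ≥ 0 where D2, D1 as in the chain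
    nlinarith [mul_le_mul_of_nonneg_right F2 (mul_nonneg pL.le pL.le),
      mul_le_mul_of_nonneg_right F3 (mul_nonneg pNM.le pL.le),
      mul_le_mul_of_nonneg_right F3 (mul_nonneg pN.le pM.le),
      mul_le_mul_of_nonneg_right F4 (mul_nonneg pM.le pM.le),
      mul_pos pL pM, mul_pos pM pM2]
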